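/- (Proposition 2, existence of good beamforming codebooks.) Let t ≥ 1. There exists a constant C₀ > 0 (depending only on t) such that for every sufficiently small δ > 0 there is a finite set B_δ of unit vectors in ℂ^t with |B_δ| ≤ C₀·δ^{−2t} and with the covering property: for every unit vector h̄ ∈ ℂ^t there exists x ∈ B_δ with |⟨x, h̄⟩|² ≥ 1 − δ. -/

import Mathlib

lemma coord_norm_le {t : ℕ} (h : EuclideanSpace ℂ (Fin t)) (i : Fin t) : ‖h i‖ ≤ ‖h‖ := by
  have h1 : ‖h i‖^2 ≤ ∑ j, ‖h j‖^2 :=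
    Finset.single_le_sum (f := fun j => ‖h j‖^2) (fun j _ => by positivity) (Finset.mem_univ i)
  rw [EuclideanSpace.norm_eq]
  calc ‖h i‖ = Real.sqrt (‖h i‖^2) := (Real.sqrt_sq (norm_nonneg _)).symm
  _ ≤ Real.sqrt (∑ j, ‖h j‖^2) := Real.sqrt_le_sqrt h1

lemma abs_round_le' (x : ℝ) : |((round x : ℤ) : ℝ)| ≤ |x| + 1/2 := by
  have h1 : |((round x : ℤ) : ℝ)| ≤ |x| + |x - round x| := by
    calc |((round x : ℤ) : ℝ)| = |x - (x - round x)| := by ring_nf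
    _ ≤ |x| + |x - round x| := abs_sub _ _
  linarith [abs_sub_round x]

set_option maxHeartbeats 2000000 in
theorem exists_good_codebooks (t : ℕ) (ht : 1 ≤ t) :
    ∃ C₀ : ℝ, 0 < C₀ ∧ ∃ δ₀ : ℝ, 0 < δ₀ ∧ ∀ δ : ℝ, 0 < δ → δ < δ₀ →
      ∃ B : Finset (EuclideanSpace ℂ (Fin t)),
        (∀ x ∈ B, ‖x‖ = 1) ∧
        (B.card : ℝ) ≤ C₀ * (δ ^ (2 * t))⁻¹ ∧
        ∀ h : EuclideanSpace ℂ (Fin t), ‖h‖ = 1 →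
          ∃ x ∈ B, 1 - δ ≤ ‖(inner ℂ x h : ℂ)‖ ^ 2 := by
  classical
  have ht' : (1:ℝ) ≤ t := by exact_mod_cast ht
  have htpos : (0:ℝ) < t := by linarith
  refine ⟨7 ^ (2*t), by positivity, 1/(4*t), by positivity, fun δ hδ hδ₀ => ?_⟩
  have hδ1 : δ ≤ 1 := by
    have : (1:ℝ)/(4*t) ≤ 1 := by
      rw [div_le_one (by positivity)]; nlinarith
    linarith
  set N : ℤ := ⌈1/δ⌉ + 1 with hN
  have hN1 : (1:ℤ) ≤ N := by
    have : (0:ℤ) < ⌈1/δ⌉ := by rw [Int.lt_ceil]; push_cast; positivity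
    omega
  have hNle : (N : ℝ) ≤ 1/δ + 2 := by
    push_cast [hN]
    have := Int.ceil_lt_add_one (1/δ)
    linarith
  set Sg : Finset ℂ := ((Finset.Icc (-N) N) ×ˢ (Finset.Icc (-N) N)).image
      (fun p => (p.1 : ℂ) * δ + (p.2 : ℂ) * δ * Complex.I) with hSg
  set G : Finset (EuclideanSpace ℂ (Fin t)) := ((Fintype.piFinset fun _ : Fin t => Sg).map (WithLp.equiv 2 (Fin t → ℂ)).symm.toEmbedding) with hG
  set B : Finset (EuclideanSpace ℂ (Fin t)) :=
      (G.filter fun p => p ≠ 0).image (fun p => ‖p‖⁻¹ • p) with hB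
  refine ⟨B, ?_, ?_, ?_⟩
  · intro x hx
    simp only [hB, Finset.mem_image, Finset.mem_filter] at hx
    obtain ⟨p, ⟨-, hp0⟩, rfl⟩ := hx
    exact norm_smul_inv_norm hp0
  · have c1 : B.card ≤ G.card :=
      le_trans Finset.card_image_le (Finset.card_le_card (Finset.filter_subset _ _))
    have c2 : G.card = Sg.card ^ t := by
      rw [hG, Finset.card_map, Fintype.card_piFinset]
      simp
    have c3 : Sg.card ≤ ((2*N+1).toNat)^2 := by
      calc Sg.card ≤ ((Finset.Icc (-N) N) ×ˢ (Finset.Icc (-N) N)).card := Finset.card_image_le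
      _ = ((2*N+1).toNat)^2 := by
          rw [Finset.card_product, Int.card_Icc, sq]
          congr 1 <;> omega
    have hcast : ((2*N+1).toNat : ℝ) = 2*(N:ℝ)+1 := by
      have : ((2*N+1).toNat : ℤ) = 2*N+1 := Int.toNat_of_nonneg (by omega)
      exact_mod_cast this
    have c4 : (2*(N:ℝ)+1) ≤ 7/δ := by
      have h5 : (5:ℝ) ≤ 5/δ := by
        rw [le_div_iff₀ hδ]; nlinarith
      calc 2*(N:ℝ)+1 ≤ 2*(1/δ+2)+1 := by linarith
      _ = 2/δ + 5 := by ring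
      _ ≤ 2/δ + 5/δ := by linarith
      _ = 7/δ := by ring
    calc (B.card : ℝ) ≤ ((Sg.card : ℝ)) ^ t := by exact_mod_cast c1.trans (le_of_eq c2)
    _ ≤ ((2*(N:ℝ)+1)^2) ^ t := by
        apply pow_le_pow_left₀ (by positivity)
        rw [← hcast]
        exact_mod_cast c3
    _ ≤ ((7/δ)^2) ^ t := by
        apply pow_le_pow_left₀ (by positivity)
        apply pow_le_pow_left₀ (by positivity) c4
    _ = 7^(2*t) * (δ ^ (2*t))⁻¹ := by
        rw [div_pow, div_pow, ← pow_mul, ← pow_mul, div_eq_mul_inv]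
  · intro h hh
    set p : EuclideanSpace ℂ (Fin t) := WithLp.toLp 2 (fun i =>
      ((round ((h i).re / δ) : ℤ) : ℂ) * δ + ((round ((h i).im / δ) : ℤ) : ℂ) * δ * Complex.I :
      Fin t → ℂ) with hp
    have hcoord : ∀ i, ‖h i‖ ≤ 1 := by intro i; rw [← hh]; exact coord_norm_le h i
    have hre : ∀ i, |(h i).re| ≤ 1 := fun i =>
      le_trans (Complex.abs_re_le_norm _) (by exact hcoord i)
    have him : ∀ i, |(h i).im| ≤ 1 := fun i =>
      le_trans (Complex.abs_im_le_norm _) (by exact hcoord i)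
    have hroundmem : ∀ x : ℝ, |x| ≤ 1 → round (x / δ) ∈ Finset.Icc (-N) N := by
      intro x hx
      have h1 : |((round (x/δ) : ℤ) : ℝ)| ≤ |x/δ| + 1/2 := abs_round_le' _
      have h2 : |x/δ| ≤ 1/δ := by
        rw [abs_div, abs_of_pos hδ]
        gcongr
      have h3 : (1:ℝ)/δ + 1/2 ≤ N := by
        have := Int.le_ceil (1/δ)
        push_cast [hN]
        linarith
      have h4 : |((round (x/δ) : ℤ) : ℝ)| ≤ (N : ℝ) := by linarith
      have h5 : |round (x/δ)| ≤ N := by exact_mod_cast h4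
      rw [Finset.mem_Icc]
      exact abs_le.1 h5
    have hpG : p ∈ G := by
      rw [hG, Finset.mem_map_equiv, Fintype.mem_piFinset]
      intro i
      rw [hSg, Finset.mem_image]
      exact ⟨(round ((h i).re / δ), round ((h i).im / δ)),
        Finset.mem_product.2 ⟨hroundmem _ (hre i), hroundmem _ (him i)⟩, rfl⟩
    have hcd : ∀ i, ‖p i - h i‖^2 ≤ δ^2/2 := by
      intro i
      have key : ∀ x : ℝ, |((round (x/δ) : ℤ) : ℝ) * δ - x| ≤ δ/2 := by
        intro x
        have e1 : ((round (x/δ) : ℤ) : ℝ) * δ - x = -((x/δ - round (x/δ)) * δ) := by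
          field_simp
          ring
        rw [e1, abs_neg, abs_mul, abs_of_pos hδ]
        have := abs_sub_round (x/δ)
        nlinarith
      have hpi : p i = ((round ((h i).re / δ) : ℤ) : ℂ) * δ
          + ((round ((h i).im / δ) : ℤ) : ℂ) * δ * Complex.I := rfl
      have hre1 : (p i - h i).re = ((round ((h i).re / δ) : ℤ):ℝ) * δ - (h i).re := by
        rw [Complex.sub_re, hpi]; simp
      have him1 : (p i - h i).im = ((round ((h i).im / δ) : ℤ):ℝ) * δ - (h i).im := by
        rw [Complex.sub_im, hpi]; simp
      have hz : ‖p i - h i‖^2 = (p i - h i).re^2 + (p i - h i).im^2 := by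
        rw [Complex.sq_norm, Complex.normSq_apply]
        ring
      rw [hz, hre1, him1]
      have k1 := abs_le.1 (key (h i).re)
      have k2 := abs_le.1 (key (h i).im)
      nlinarith [k1.1, k1.2, k2.1, k2.2]
    have hεsq : ‖p - h‖^2 ≤ t * δ^2 := by
      have e1 : ‖p - h‖ = Real.sqrt (∑ i, ‖(p - h) i‖^2) := EuclideanSpace.norm_eq _
      rw [e1, Real.sq_sqrt (by positivity)]
      calc ∑ i, ‖(p - h) i‖^2 ≤ ∑ _i : Fin t, δ^2/2 := by
            apply Finset.sum_le_sum
            intro i _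
            exact hcd i
      _ = t * (δ^2/2) := by
          rw [Finset.sum_const, Finset.card_univ, Fintype.card_fin, nsmul_eq_mul]
      _ ≤ t * δ^2 := by nlinarith
    have hsmall : t * δ^2 ≤ δ/4 := by
      have h4t : δ * (4*t) < 1 := by
        rw [← lt_div_iff₀ (by positivity)]; exact hδ₀
      nlinarith
    have hεhalf : ‖p - h‖ ≤ 1/2 := by
      nlinarith [norm_nonneg (p - h), sq_nonneg (‖p - h‖ - 1/2), hεsq, hsmall, hδ1]
    have hpnorm : (1:ℝ)/2 ≤ ‖p‖ := by
      have h1 := abs_norm_sub_norm_le p h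
      rw [hh] at h1
      have h2 := (abs_le.1 h1).1
      linarith
    have hp0 : p ≠ 0 := by
      intro hcon
      rw [hcon, norm_zero] at hpnorm
      linarith
    refine ⟨‖p‖⁻¹ • p, ?_, ?_⟩
    · rw [hB, Finset.mem_image]
      exact ⟨p, Finset.mem_filter.2 ⟨hpG, hp0⟩, rfl⟩
    · set x : EuclideanSpace ℂ (Fin t) := ‖p‖⁻¹ • p with hx
      have hxnorm : ‖x‖ = 1 := norm_smul_inv_norm hp0
      have hxp : ‖x - p‖ = |1 - ‖p‖| := by
        have e1 : x - p = (‖p‖⁻¹ - 1) • p := by rw [hx, sub_smul, one_smul]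
        rw [e1, norm_smul, Real.norm_eq_abs]
        have hpp : (0:ℝ) < ‖p‖ := by linarith
        rw [← abs_of_pos hpp, ← abs_mul]
        congr 1
        field_simp
        rw [abs_of_pos hpp]; ring
      have hxp2 : ‖x - p‖ ≤ ‖p - h‖ := by
        rw [hxp]
        have h1 := abs_norm_sub_norm_le p h
        rw [hh] at h1
        rw [abs_sub_comm]
        exact h1
      have hxh : ‖x - h‖ ≤ 2 * ‖p - h‖ := by
        calc ‖x - h‖ ≤ ‖x - p‖ + ‖p - h‖ := norm_sub_le_norm_sub_add_norm_sub x p h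
        _ ≤ 2 * ‖p - h‖ := by linarith
      have hre' : Complex.re (inner ℂ x h : ℂ) = 1 - ‖x - h‖^2/2 := by
        have e := @norm_sub_sq ℂ _ _ _ _ x h
        rw [hxnorm, hh] at e
        simp only [one_pow, RCLike.re_to_complex] at e
        linarith
      have hrelb : 1 - 2 * (t * δ^2) ≤ Complex.re (inner ℂ x h : ℂ) := by
        rw [hre']
        have hsq2 : ‖x - h‖^2 ≤ (2*‖p - h‖)^2 := pow_le_pow_left₀ (norm_nonneg _) hxh 2
        nlinarith [hεsq]
      have habs : Complex.re (inner ℂ x h : ℂ) ≤ ‖(inner ℂ x h : ℂ)‖ := by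
        exact Complex.re_le_norm _
      have hnn : (0:ℝ) ≤ 1 - 2 * (t * δ^2) := by linarith
      have hsq : (1 - 2*(t*δ^2))^2 ≤ ‖(inner ℂ x h : ℂ)‖^2 :=
        pow_le_pow_left₀ hnn (le_trans hrelb habs) 2
      nlinarith [hsmall, hδ.le, sq_nonneg (t*δ^2)]
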